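/- arXiv:1402.2950 — 2 statements merged into one kernel-verified Lean document; each statement's English description precedes it below -/
import Mathlib

section
/- For x in ℝ^n with x ≠ 0, and for any α ∈ ℝ and nonnegative integer j, the j-th power of the Laplacian applied to |x|^(-2α) satisfies L^j |x|^(-2α) = 2^(2j) (α)_j (α + 1 - n/2)_j |x|^(-2(α+j)), where (a)_j = a(a+1)···(a+j-1) is the Pochhammer symbol and L = ∂₁² + ... + ∂ₙ² is the Laplacian. -/
open Finset

/-- The Euclidean Laplacian `L = ∂₁² + ⋯ + ∂ₙ²` acting on functions on `ℝⁿ`. -/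
noncomputable def lap (n : ℕ) (f : EuclideanSpace ℝ (Fin n) → ℝ)
    (x : EuclideanSpace ℝ (Fin n)) : ℝ :=
  ∑ i, fderiv ℝ (fun y => fderiv ℝ f y (EuclideanSpace.single i 1)) x
    (EuclideanSpace.single i 1)

/-- The Pochhammer symbol `(a)_j = a (a+1) ⋯ (a+j-1)`. -/
noncomputable def poch (a : ℝ) (j : ℕ) : ℝ := ∏ i ∈ Finset.range j, (a + i)

section Aux

variable {n : ℕ}
local notation "E" => EuclideanSpace ℝ (Fin n)

lemma aux_hasFDerivAt_norm_rpow (p : ℝ) {x : E} (hx : x ≠ 0) :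
    HasFDerivAt (fun y : E => ‖y‖ ^ p) ((p * ‖x‖ ^ (p - 2)) • innerSL ℝ x) x := by
  have hxn : ‖x‖ ≠ 0 := norm_ne_zero_iff.2 hx
  have hx2 : (‖x‖ ^ 2 : ℝ) ≠ 0 := by positivity
  have h1 : HasFDerivAt (fun y : E => ‖y‖ ^ 2) (2 • innerSL ℝ x) x :=
    (hasStrictFDerivAt_norm_sq x).hasFDerivAt
  have h2 : HasDerivAt (fun t : ℝ => t ^ (p / 2)) (p / 2 * (‖x‖ ^ 2) ^ (p / 2 - 1)) (‖x‖ ^ 2) :=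
    Real.hasDerivAt_rpow_const (Or.inl hx2)
  have h3 := h2.comp_hasFDerivAt x h1
  have hfun : (fun y : E => ‖y‖ ^ p) = fun y : E => (‖y‖ ^ 2) ^ (p / 2) := by
    funext y
    rw [← Real.rpow_natCast ‖y‖ 2, ← Real.rpow_mul (norm_nonneg y)]
    congr 1; ring
  have hsq : ((‖x‖ ^ 2 : ℝ)) ^ (p / 2 - 1) = ‖x‖ ^ (p - 2) := by
    rw [← Real.rpow_natCast ‖x‖ 2, ← Real.rpow_mul (norm_nonneg x)]
    congr 1; ring
  have hL : (p * ‖x‖ ^ (p - 2)) • innerSL ℝ x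
      = (p / 2 * (‖x‖ ^ 2) ^ (p / 2 - 1)) • (2 • innerSL ℝ x) := by
    ext v; simp [hsq]; ring
  rw [hfun, hL]
  exact h3

lemma lap_const_mul_rpow (c p : ℝ) {x : E} (hx : x ≠ 0) :
    lap n (fun y => c * ‖y‖ ^ p) x = c * (p * (p + n - 2)) * ‖x‖ ^ (p - 2) := by
  have hxp : (0:ℝ) < ‖x‖ := norm_pos_iff.2 hx
  have key : ∀ i : Fin n,
      fderiv ℝ (fun y => fderiv ℝ (fun z : E => c * ‖z‖ ^ p) y (EuclideanSpace.single i 1)) x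
        (EuclideanSpace.single i 1)
      = c * p * ((p - 2) * ‖x‖ ^ (p - 4) * (x i * x i) + ‖x‖ ^ (p - 2)) := by
    intro i
    have hEq : (fun y => fderiv ℝ (fun z : E => c * ‖z‖ ^ p) y (EuclideanSpace.single i 1))
        =ᶠ[nhds x] (fun y => (c * p) * (‖y‖ ^ (p - 2) * y i)) := by
      refine Filter.eventually_of_mem (isOpen_compl_singleton.mem_nhds hx) fun y hy => ?_
      have hy' : y ≠ 0 := hy
      dsimp only
      rw [((aux_hasFDerivAt_norm_rpow p hy').const_mul c).fderiv]
      simp [EuclideanSpace.inner_single_right]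
      ring
    rw [hEq.fderiv_eq]
    have h_a : HasFDerivAt (fun y : E => ‖y‖ ^ (p - 2))
        (((p - 2) * ‖x‖ ^ (p - 4)) • innerSL ℝ x) x := by
      have := aux_hasFDerivAt_norm_rpow (p - 2) hx
      rwa [show p - 2 - 2 = p - 4 by ring] at this
    have h_b : HasFDerivAt (fun y : E => y i) (EuclideanSpace.proj (𝕜 := ℝ) i) x :=
      (EuclideanSpace.proj (𝕜 := ℝ) i).hasFDerivAt
    have hG := ((h_a.mul h_b).const_mul (c * p)).fderiv
    simp only [Pi.mul_apply] at hG; rw [hG]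
    simp [EuclideanSpace.inner_single_right, EuclideanSpace.single_apply]
    ring
  unfold lap
  rw [Finset.sum_congr rfl fun i _ => key i]
  have hsum : ∑ i, x i * x i = ‖x‖ ^ 2 := by
    have h := real_inner_self_eq_norm_sq x
    rw [PiLp.inner_apply] at h
    simpa [RCLike.inner_apply, ← sq] using h
  have hpow : ‖x‖ ^ (p - 4) * ‖x‖ ^ 2 = ‖x‖ ^ (p - 2) := by
    rw [← Real.rpow_natCast ‖x‖ 2, ← Real.rpow_add hxp]
    congr 1; ring
  simp only [Finset.sum_add_distrib, ← Finset.mul_sum, Finset.sum_const, Finset.card_univ,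
    Fintype.card_fin, nsmul_eq_mul, hsum]
  linear_combination (c * p * (p - 2)) * hpow

lemma lap_congr {f g : E → ℝ} {x : E} (h : f =ᶠ[nhds x] g) : lap n f x = lap n g x := by
  unfold lap
  refine Finset.sum_congr rfl fun i _ => ?_
  have h1 : (fun y => fderiv ℝ f y (EuclideanSpace.single i 1))
      =ᶠ[nhds x] fun y => fderiv ℝ g y (EuclideanSpace.single i 1) :=
    (Filter.EventuallyEq.fderiv (𝕜 := ℝ) h).mono fun y hy => by dsimp only; rw [hy]
  rw [h1.fderiv_eq]

end Aux

/-- Bernstein–Sato type identity: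
`L^j |x|^{-2α} = 2^{2j} (α)_j (α + 1 - n/2)_j |x|^{-2(α+j)}` for `x ≠ 0`. -/
theorem laplacian_pow_rpow (n : ℕ) (α : ℝ) (j : ℕ)
    (x : EuclideanSpace ℝ (Fin n)) (hx : x ≠ 0) :
    (lap n)^[j] (fun y => ‖y‖ ^ (-(2 * α))) x
      = 2 ^ (2 * j) * poch α j * poch (α + 1 - n / 2) j
        * ‖x‖ ^ (-(2 * (α + j))) := by
  induction j generalizing x with
  | zero => simp [poch]
  | succ j ih =>
    rw [Function.iterate_succ_apply']
    have hEq : (lap n)^[j] (fun y : EuclideanSpace ℝ (Fin n) => ‖y‖ ^ (-(2 * α)))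
        =ᶠ[nhds x] fun y =>
          (2 ^ (2 * j) * poch α j * poch (α + 1 - n / 2) j) * ‖y‖ ^ (-(2 * (α + j))) :=
      Filter.eventually_of_mem (isOpen_compl_singleton.mem_nhds hx) fun y hy => ih y hy
    rw [lap_congr hEq, lap_const_mul_rpow _ _ hx,
      show (-(2 * (α + (j : ℝ))) - 2) = -(2 * (α + ((j + 1 : ℕ) : ℝ))) by push_cast; ring]
    simp only [poch, Finset.prod_range_succ]
    push_cast
    ring
end

section
/- Let d ≥ 1 and a, b > 0 with a + b < d, a < d, b < d. Then for every unit vector u ∈ ℝ^d, the function v ↦ |u - v|^{a - d} |v|^{b - d} is integrable on ℝ^d, and its integral equals π^{d/2} Γ(a/2) Γ(b/2) Γ((d - a - b)/2) / (Γ((d-a)/2) Γ((d-b)/2) Γ((a+b)/2)). -/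
open MeasureTheory Real Set
open scoped ENNReal RealInnerProductSpace

namespace RieszAux

lemma integrableOn_gamma_kernel {c r : ℝ} (hc : 0 < c) (hr : 0 < r) :
    IntegrableOn (fun t : ℝ => t ^ (c - 1) * Real.exp (-(r * t))) (Ioi 0) := by
  have h : IntegrableOn (fun x : ℝ => Real.exp (-x) * x ^ (c - 1)) (Ioi (r * 0)) := by
    simpa using Real.GammaIntegral_convergent hc
  have h2 := (integrableOn_Ioi_comp_mul_left_iff
      (fun x : ℝ => Real.exp (-x) * x ^ (c - 1)) 0 hr).2 h
  have h3 : IntegrableOn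
      (fun x : ℝ => ((r : ℝ) ^ (c - 1))⁻¹ * (Real.exp (-(r * x)) * (r * x) ^ (c - 1)))
      (Ioi 0) := h2.const_mul _
  refine h3.congr_fun (fun x hx => ?_) measurableSet_Ioi
  have hx0 : (0:ℝ) < x := hx
  beta_reduce
  rw [Real.mul_rpow hr.le hx0.le]
  have : (r : ℝ) ^ (c-1) ≠ 0 := (Real.rpow_pos_of_pos hr _).ne'
  field_simp

lemma lintegral_gamma_kernel {c r : ℝ} (hc : 0 < c) (hr : 0 < r) :
    ∫⁻ t in Ioi (0:ℝ), ENNReal.ofReal (t ^ (c - 1) * Real.exp (-(r * t)))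
      = ENNReal.ofReal ((1 / r) ^ c * Real.Gamma c) := by
  rw [← ofReal_integral_eq_lintegral_ofReal (integrableOn_gamma_kernel hc hr) ?_,
    integral_rpow_mul_exp_neg_mul_Ioi hc hr]
  filter_upwards [ae_restrict_mem measurableSet_Ioi] with t ht
  exact mul_nonneg (Real.rpow_nonneg (le_of_lt ht) _) (Real.exp_nonneg _)

lemma lintegral_Ioi_scale {c : ℝ} (hc : 0 < c) (f : ℝ → ℝ≥0∞) :
    ∫⁻ s in Ioi (0:ℝ), f s = ∫⁻ σ in Ioi (0:ℝ), ENNReal.ofReal c * f (c * σ) := by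
  have hme : MeasurableEmbedding (fun x : ℝ => c * x) :=
    (Homeomorph.mulLeft₀ c hc.ne').measurableEmbedding
  have hmap : Measure.map (fun x : ℝ => c * x) (volume.restrict (Ioi 0))
      = ENNReal.ofReal c⁻¹ • volume.restrict (Ioi (0:ℝ)) := by
    have hpre : (fun x : ℝ => c * x) ⁻¹' (Ioi 0) = Ioi 0 := by
      rw [preimage_const_mul_Ioi₀ _ hc, zero_div]
    calc Measure.map (fun x : ℝ => c * x) (volume.restrict (Ioi 0))
        = Measure.map (fun x : ℝ => c * x)
            (volume.restrict ((fun x : ℝ => c * x) ⁻¹' (Ioi 0))) := by rw [hpre]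
      _ = (Measure.map (fun x : ℝ => c * x) volume).restrict (Ioi 0) :=
          (Measure.restrict_map hme.measurable measurableSet_Ioi).symm
      _ = ENNReal.ofReal c⁻¹ • volume.restrict (Ioi (0:ℝ)) := by
          rw [Real.map_volume_mul_left hc.ne', abs_of_pos (inv_pos.2 hc),
            Measure.restrict_smul]
  rw [lintegral_const_mul' _ _ ENNReal.ofReal_ne_top]
  have : ∫⁻ σ in Ioi (0:ℝ), f (c * σ) = ENNReal.ofReal c⁻¹ * ∫⁻ s in Ioi (0:ℝ), f s := by
    rw [← hme.lintegral_map, hmap]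
    simp [lintegral_smul_measure]
  rw [this, ← mul_assoc, ← ENNReal.ofReal_mul hc.le, mul_inv_cancel₀ hc.ne', ENNReal.ofReal_one,
    one_mul]

lemma integrable_gauss {V : Type*} [NormedAddCommGroup V] [InnerProductSpace ℝ V]
    [FiniteDimensional ℝ V] [MeasurableSpace V] [BorelSpace V] {c : ℝ} (hc : 0 < c) :
    Integrable (fun v : V => Real.exp (-(c * ‖v‖ ^ 2))) := by
  have h := (GaussianFourier.integrable_cexp_neg_mul_sq_norm_add (b := (c:ℂ))
      (by simpa using hc) 0 (0 : V)).norm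
  refine h.congr (ae_of_all _ fun v => ?_)
  simp [Complex.norm_exp, ← Complex.ofReal_pow, neg_mul]

lemma lintegral_gauss (d : ℕ) {c : ℝ} (hc : 0 < c) :
    ∫⁻ v : EuclideanSpace ℝ (Fin d), ENNReal.ofReal (Real.exp (-(c * ‖v‖ ^ 2)))
      = ENNReal.ofReal ((Real.pi / c) ^ ((d : ℝ) / 2)) := by
  rw [← ofReal_integral_eq_lintegral_ofReal (integrable_gauss hc)
      (ae_of_all _ fun v => (Real.exp_nonneg _))]
  congr 1
  have := GaussianFourier.integral_rexp_neg_mul_sq_norm (V := EuclideanSpace ℝ (Fin d)) hc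
  simp only [neg_mul] at this ⊢
  rw [this, finrank_euclideanSpace_fin]

lemma ofReal_mul_cancel {x y : ℝ} (hx : 0 < x) {X : ℝ≥0∞}
    (h : ENNReal.ofReal x * X = ENNReal.ofReal y) : X = ENNReal.ofReal (y / x) := by
  have h0 : ENNReal.ofReal x ≠ 0 := by
    simpa [ENNReal.ofReal_eq_zero] using hx.not_ge
  have h2 := congrArg (fun z => (ENNReal.ofReal x)⁻¹ * z) h
  simp only [← mul_assoc, ENNReal.inv_mul_cancel h0 ENNReal.ofReal_ne_top, one_mul] at h2
  rw [h2, ENNReal.ofReal_div_of_pos hx, ENNReal.div_eq_inv_mul]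

lemma lintegral_beta {p q : ℝ} (hp : 0 < p) (hq : 0 < q) :
    ∫⁻ σ in Ioi (0:ℝ), ENNReal.ofReal (σ ^ (p - 1) * (1 + σ) ^ (-(p + q)))
      = ENNReal.ofReal (Real.Gamma p * Real.Gamma q / Real.Gamma (p + q)) := by
  have hpq : 0 < p + q := by linarith
  apply ofReal_mul_cancel (Real.Gamma_pos_of_pos hpq)
  rw [← lintegral_const_mul' _ _ ENNReal.ofReal_ne_top]
  have step1 : ∀ σ ∈ Ioi (0:ℝ),
      ENNReal.ofReal (Real.Gamma (p + q)) * ENNReal.ofReal (σ ^ (p - 1) * (1 + σ) ^ (-(p + q)))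
        = ∫⁻ t in Ioi (0:ℝ),
            ENNReal.ofReal (σ ^ (p - 1) * (t ^ (p + q - 1) * Real.exp (-((1 + σ) * t)))) := by
    intro σ hσ
    have hσ0 : (0:ℝ) < σ := hσ
    have h1σ : (0:ℝ) < 1 + σ := by linarith
    have key : ∫⁻ t in Ioi (0:ℝ),
        ENNReal.ofReal (σ ^ (p - 1) * (t ^ (p + q - 1) * Real.exp (-((1 + σ) * t))))
        = ENNReal.ofReal (σ ^ (p - 1)) *
            ENNReal.ofReal ((1 / (1 + σ)) ^ (p + q) * Real.Gamma (p + q)) := by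
      rw [← lintegral_gamma_kernel hpq h1σ, ← lintegral_const_mul' _ _ ENNReal.ofReal_ne_top]
      refine lintegral_congr fun t => ?_
      rw [← ENNReal.ofReal_mul (Real.rpow_nonneg hσ0.le _)]
    rw [key, ← ENNReal.ofReal_mul (Real.rpow_nonneg hσ0.le _),
      ← ENNReal.ofReal_mul (Real.Gamma_pos_of_pos hpq).le]
    congr 1
    rw [one_div, Real.inv_rpow h1σ.le, ← Real.rpow_neg h1σ.le]
    ring
  rw [setLIntegral_congr_fun_ae measurableSet_Ioi (ae_of_all _ step1)]
  have hmeas : AEMeasurable (Function.uncurry fun σ t =>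
      ENNReal.ofReal (σ ^ (p - 1) * (t ^ (p + q - 1) * Real.exp (-((1 + σ) * t)))))
      ((volume.restrict (Ioi (0:ℝ))).prod (volume.restrict (Ioi (0:ℝ)))) := by
    apply Measurable.aemeasurable
    fun_prop
  rw [lintegral_lintegral_swap hmeas]
  have step2 : ∀ t ∈ Ioi (0:ℝ),
      ∫⁻ σ in Ioi (0:ℝ),
          ENNReal.ofReal (σ ^ (p - 1) * (t ^ (p + q - 1) * Real.exp (-((1 + σ) * t))))
        = ENNReal.ofReal (Real.Gamma p) * ENNReal.ofReal (t ^ (q - 1) * Real.exp (-(1 * t))) := by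
    intro t ht
    have ht0 : (0:ℝ) < t := ht
    have key : ∫⁻ σ in Ioi (0:ℝ),
        ENNReal.ofReal (σ ^ (p - 1) * (t ^ (p + q - 1) * Real.exp (-((1 + σ) * t))))
        = ENNReal.ofReal (t ^ (p + q - 1) * Real.exp (-t)) *
            ENNReal.ofReal ((1 / t) ^ p * Real.Gamma p) := by
      rw [← lintegral_gamma_kernel hp ht0, ← lintegral_const_mul' _ _ ENNReal.ofReal_ne_top]
      refine lintegral_congr fun σ => ?_
      rw [← ENNReal.ofReal_mul (mul_nonneg (Real.rpow_nonneg ht0.le _) (Real.exp_nonneg _))]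
      congr 1
      have : Real.exp (-((1 + σ) * t)) = Real.exp (-t) * Real.exp (-(t * σ)) := by
        rw [← Real.exp_add]; ring_nf
      rw [this]; ring
    rw [key, ← ENNReal.ofReal_mul (by positivity), ← ENNReal.ofReal_mul (by positivity)]
    congr 1
    have h1 : (1 / t) ^ p = t ^ (-p) := by
      rw [one_div, Real.inv_rpow ht0.le, ← Real.rpow_neg ht0.le]
    rw [h1, one_mul]
    have h2 : t ^ (p + q - 1) * t ^ (-p) = t ^ (q - 1) := by
      rw [← Real.rpow_add ht0]; ring_nf
    calc t ^ (p + q - 1) * Real.exp (-t) * (t ^ (-p) * Real.Gamma p)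
        = Real.Gamma p * (t ^ (p + q - 1) * t ^ (-p) * Real.exp (-t)) := by ring
      _ = Real.Gamma p * (t ^ (q - 1) * Real.exp (-t)) := by rw [h2]
      _ = _ := by ring_nf
  rw [setLIntegral_congr_fun_ae measurableSet_Ioi (ae_of_all _ step2),
    lintegral_const_mul' _ _ ENNReal.ofReal_ne_top, lintegral_gamma_kernel hq one_pos]
  rw [← ENNReal.ofReal_mul (Real.Gamma_pos_of_pos hp).le]
  congr 1
  simp [Real.one_rpow]

end RieszAux

open RieszAux

set_option maxHeartbeats 2000000 in
/-- The beta-type convolution identity: for `0 < a, b`, `a + b < d`, `a < d`, `b < d`,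
and a unit vector `u ∈ ℝ^d`, the function `v ↦ |u-v|^{a-d}|v|^{b-d}` is integrable on
`ℝ^d` with integral
`π^{d/2} Γ(a/2)Γ(b/2)Γ((d-a-b)/2) / (Γ((d-a)/2)Γ((d-b)/2)Γ((a+b)/2))`. -/
theorem riesz_convolution_identity (d : ℕ) (hd : 1 ≤ d) (a b : ℝ)
    (ha : 0 < a) (hb : 0 < b) (hab : a + b < d) (ha' : a < d) (hb' : b < d)
    (u : EuclideanSpace ℝ (Fin d)) (hu : ‖u‖ = 1) :
    Integrable (fun v : EuclideanSpace ℝ (Fin d) =>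
        ‖u - v‖ ^ (a - d) * ‖v‖ ^ (b - d))
    ∧ (∫ v : EuclideanSpace ℝ (Fin d), ‖u - v‖ ^ (a - d) * ‖v‖ ^ (b - d))
        = Real.pi ^ ((d : ℝ) / 2) * Real.Gamma (a / 2) * Real.Gamma (b / 2)
            * Real.Gamma (((d : ℝ) - a - b) / 2)
          / (Real.Gamma (((d : ℝ) - a) / 2) * Real.Gamma (((d : ℝ) - b) / 2)
              * Real.Gamma ((a + b) / 2)) := by
  have hd0 : (0:ℝ) < d := by exact_mod_cast Nat.lt_of_lt_of_le Nat.zero_lt_one hd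
  set α : ℝ := ((d:ℝ) - a) / 2 with hα_def
  set β : ℝ := ((d:ℝ) - b) / 2 with hβ_def
  set γ : ℝ := ((d:ℝ) - a - b) / 2 with hγ_def
  have hα : 0 < α := by simp only [hα_def]; linarith
  have hβ : 0 < β := by simp only [hβ_def]; linarith
  have hγ : 0 < γ := by simp only [hγ_def]; linarith
  have hab2 : 0 < (a + b) / 2 := by linarith
  haveI : Nontrivial (EuclideanSpace ℝ (Fin d)) := by
    apply Module.nontrivial_of_finrank_pos (R := ℝ)
    rw [finrank_euclideanSpace_fin]
    exact hd
  -- the nonnegative integrand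
  have hF_nonneg : ∀ v : EuclideanSpace ℝ (Fin d),
      0 ≤ ‖u - v‖ ^ (a - (d:ℝ)) * ‖v‖ ^ (b - (d:ℝ)) := fun v =>
    mul_nonneg (Real.rpow_nonneg (norm_nonneg _) _) (Real.rpow_nonneg (norm_nonneg _) _)
  have hF_meas : Measurable (fun v : EuclideanSpace ℝ (Fin d) =>
      ‖u - v‖ ^ (a - (d:ℝ)) * ‖v‖ ^ (b - (d:ℝ))) := by fun_prop
  -- the key lintegral computation
  have main : ∫⁻ v : EuclideanSpace ℝ (Fin d),
      ENNReal.ofReal (‖u - v‖ ^ (a - (d:ℝ)) * ‖v‖ ^ (b - (d:ℝ)))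
      = ENNReal.ofReal (Real.pi ^ ((d : ℝ) / 2) * Real.Gamma (a / 2) * Real.Gamma (b / 2)
            * Real.Gamma γ / (Real.Gamma α * Real.Gamma β * Real.Gamma ((a + b) / 2))) := by
    have hπ : (0:ℝ) < Real.pi := Real.pi_pos
    set D : ℝ := (d : ℝ) / 2 with hD_def
    -- rpow of inverse square norm
    have hrn : ∀ (x : EuclideanSpace ℝ (Fin d)) (c : ℝ),
        ((1 / (‖x‖ ^ 2) : ℝ)) ^ c = ‖x‖ ^ (-(2 * c)) := by
      intro x c
      rw [one_div, Real.inv_rpow (sq_nonneg _), ← Real.rpow_neg (sq_nonneg _),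
        ← Real.rpow_natCast ‖x‖ 2, ← Real.rpow_mul (norm_nonneg _)]
      norm_num
    -- Step A : pointwise subordination identity
    have stepA : ∀ v : EuclideanSpace ℝ (Fin d), v ≠ 0 → u - v ≠ 0 →
        (∫⁻ t in Ioi (0:ℝ), ∫⁻ s in Ioi (0:ℝ),
            ENNReal.ofReal (t ^ (α - 1) * Real.exp (-(‖u - v‖ ^ 2 * t)) *
              (s ^ (β - 1) * Real.exp (-(‖v‖ ^ 2 * s)))))
          = ENNReal.ofReal (Real.Gamma α * Real.Gamma β) *
              ENNReal.ofReal (‖u - v‖ ^ (a - (d:ℝ)) * ‖v‖ ^ (b - (d:ℝ))) := by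
      intro v hv huv
      have h1 : (0:ℝ) < ‖u - v‖ ^ 2 := pow_pos (norm_pos_iff.2 huv) 2
      have h2 : (0:ℝ) < ‖v‖ ^ 2 := pow_pos (norm_pos_iff.2 hv) 2
      have inner1 : ∀ t ∈ Ioi (0:ℝ),
          (∫⁻ s in Ioi (0:ℝ), ENNReal.ofReal (t ^ (α - 1) * Real.exp (-(‖u - v‖ ^ 2 * t)) *
                (s ^ (β - 1) * Real.exp (-(‖v‖ ^ 2 * s)))))
            = ENNReal.ofReal (t ^ (α - 1) * Real.exp (-(‖u - v‖ ^ 2 * t))) *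
                ENNReal.ofReal ((1 / ‖v‖ ^ 2) ^ β * Real.Gamma β) := by
        intro t ht
        have ht0 : (0:ℝ) < t := ht
        rw [← lintegral_gamma_kernel hβ h2, ← lintegral_const_mul' _ _ ENNReal.ofReal_ne_top]
        refine lintegral_congr fun s => ?_
        rw [← ENNReal.ofReal_mul (mul_nonneg (Real.rpow_nonneg ht0.le _) (Real.exp_nonneg _))]
      rw [setLIntegral_congr_fun_ae measurableSet_Ioi (ae_of_all _ inner1),
        lintegral_mul_const' _ _ ENNReal.ofReal_ne_top, lintegral_gamma_kernel hα h1]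
      rw [← ENNReal.ofReal_mul (by positivity), ← ENNReal.ofReal_mul (by positivity)]
      congr 1
      rw [hrn, hrn]
      have e1 : -(2 * α) = a - (d:ℝ) := by rw [hα_def]; ring
      have e2 : -(2 * β) = b - (d:ℝ) := by rw [hβ_def]; ring
      rw [e1, e2]; ring
    -- the triple integral
    have hv0 : ∀ᵐ v : EuclideanSpace ℝ (Fin d), v ≠ 0 := by
      rw [ae_iff]
      simpa [Set.setOf_eq_eq_singleton] using measure_singleton (0 : EuclideanSpace ℝ (Fin d))
    have hv1 : ∀ᵐ v : EuclideanSpace ℝ (Fin d), u - v ≠ 0 := by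
      rw [ae_iff]
      have : {v : EuclideanSpace ℝ (Fin d) | ¬ u - v ≠ 0} = {u} := by
        ext v; simp [sub_eq_zero, eq_comm]
      rw [this]
      exact measure_singleton u
    have hT1 : (∫⁻ v : EuclideanSpace ℝ (Fin d), ∫⁻ t in Ioi (0:ℝ), ∫⁻ s in Ioi (0:ℝ),
            ENNReal.ofReal (t ^ (α - 1) * Real.exp (-(‖u - v‖ ^ 2 * t)) *
              (s ^ (β - 1) * Real.exp (-(‖v‖ ^ 2 * s)))))
        = ENNReal.ofReal (Real.Gamma α * Real.Gamma β) *
            ∫⁻ v : EuclideanSpace ℝ (Fin d),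
              ENNReal.ofReal (‖u - v‖ ^ (a - (d:ℝ)) * ‖v‖ ^ (b - (d:ℝ))) := by
      rw [← lintegral_const_mul' _ _ ENNReal.ofReal_ne_top]
      refine lintegral_congr_ae ?_
      filter_upwards [hv0, hv1] with v hv huv using stepA v hv huv
    -- swap the integrals to put `v` innermost
    have hswap1 : (∫⁻ v : EuclideanSpace ℝ (Fin d), ∫⁻ t in Ioi (0:ℝ), ∫⁻ s in Ioi (0:ℝ),
            ENNReal.ofReal (t ^ (α - 1) * Real.exp (-(‖u - v‖ ^ 2 * t)) *
              (s ^ (β - 1) * Real.exp (-(‖v‖ ^ 2 * s)))))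
        = ∫⁻ t in Ioi (0:ℝ), ∫⁻ s in Ioi (0:ℝ), ∫⁻ v : EuclideanSpace ℝ (Fin d),
            ENNReal.ofReal (t ^ (α - 1) * Real.exp (-(‖u - v‖ ^ 2 * t)) *
              (s ^ (β - 1) * Real.exp (-(‖v‖ ^ 2 * s)))) := by
      rw [lintegral_lintegral_swap]
      · refine lintegral_congr fun t => ?_
        rw [lintegral_lintegral_swap]
        apply Measurable.aemeasurable
        fun_prop
      · apply Measurable.aemeasurable
        apply Measurable.lintegral_prod_right (f := fun (p : EuclideanSpace ℝ (Fin d) × ℝ)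
          (s : ℝ) => ENNReal.ofReal (p.2 ^ (α - 1) * Real.exp (-(‖u - p.1‖ ^ 2 * p.2)) *
            (s ^ (β - 1) * Real.exp (-(‖p.1‖ ^ 2 * s)))))
        fun_prop
    -- Step B : the Gaussian integral over v
    have stepB : ∀ t ∈ Ioi (0:ℝ), ∀ s ∈ Ioi (0:ℝ),
        (∫⁻ v : EuclideanSpace ℝ (Fin d),
            ENNReal.ofReal (t ^ (α - 1) * Real.exp (-(‖u - v‖ ^ 2 * t)) *
              (s ^ (β - 1) * Real.exp (-(‖v‖ ^ 2 * s)))))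
          = ENNReal.ofReal (t ^ (α - 1) * s ^ (β - 1) * Real.exp (-(t * s / (t + s))) *
              (Real.pi / (t + s)) ^ D) := by
      intro t ht s hs
      have ht0 : (0:ℝ) < t := ht
      have hs0 : (0:ℝ) < s := hs
      have hts : (0:ℝ) < t + s := by linarith
      set w : EuclideanSpace ℝ (Fin d) := (t / (t + s)) • u with hw
      have hsq : ∀ v : EuclideanSpace ℝ (Fin d),
          ‖u - v‖ ^ 2 * t + ‖v‖ ^ 2 * s = (t + s) * ‖v - w‖ ^ 2 + t * s / (t + s) := by
        intro v
        have h1 := norm_sub_sq_real u v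
        have h2 := norm_sub_sq_real v w
        have h3 : ⟪v, w⟫ = (t / (t + s)) * ⟪u, v⟫ := by
          rw [hw, real_inner_smul_right, real_inner_comm]
        have h4 : ‖w‖ ^ 2 = (t / (t + s)) ^ 2 := by
          rw [hw, norm_smul, hu, mul_one, Real.norm_eq_abs, sq_abs]
        rw [h1, h2, h3, h4, hu]
        field_simp
        ring
      calc (∫⁻ v : EuclideanSpace ℝ (Fin d),
            ENNReal.ofReal (t ^ (α - 1) * Real.exp (-(‖u - v‖ ^ 2 * t)) *
              (s ^ (β - 1) * Real.exp (-(‖v‖ ^ 2 * s)))))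
          = ∫⁻ v : EuclideanSpace ℝ (Fin d),
              ENNReal.ofReal (t ^ (α - 1) * s ^ (β - 1) * Real.exp (-(t * s / (t + s)))) *
                ENNReal.ofReal (Real.exp (-((t + s) * ‖v - w‖ ^ 2))) := by
            refine lintegral_congr fun v => ?_
            rw [← ENNReal.ofReal_mul (mul_nonneg (mul_nonneg (Real.rpow_nonneg ht0.le _)
              (Real.rpow_nonneg hs0.le _)) (Real.exp_nonneg _))]
            congr 1
            have e : Real.exp (-(‖u - v‖ ^ 2 * t)) * Real.exp (-(‖v‖ ^ 2 * s))
                = Real.exp (-(t * s / (t + s))) * Real.exp (-((t + s) * ‖v - w‖ ^ 2)) := by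
              rw [← Real.exp_add, ← Real.exp_add, ← neg_add, ← neg_add, hsq v]
              ring_nf
            calc t ^ (α - 1) * Real.exp (-(‖u - v‖ ^ 2 * t)) *
                  (s ^ (β - 1) * Real.exp (-(‖v‖ ^ 2 * s)))
                = t ^ (α - 1) * s ^ (β - 1) *
                    (Real.exp (-(‖u - v‖ ^ 2 * t)) * Real.exp (-(‖v‖ ^ 2 * s))) := by ring
              _ = t ^ (α - 1) * s ^ (β - 1) * Real.exp (-(t * s / (t + s))) *
                    Real.exp (-((t + s) * ‖v - w‖ ^ 2)) := by rw [e]; ring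
        _ = ENNReal.ofReal (t ^ (α - 1) * s ^ (β - 1) * Real.exp (-(t * s / (t + s)))) *
              ∫⁻ v : EuclideanSpace ℝ (Fin d),
                ENNReal.ofReal (Real.exp (-((t + s) * ‖v - w‖ ^ 2))) :=
            lintegral_const_mul' _ _ ENNReal.ofReal_ne_top
        _ = ENNReal.ofReal (t ^ (α - 1) * s ^ (β - 1) * Real.exp (-(t * s / (t + s)))) *
              ENNReal.ofReal ((Real.pi / (t + s)) ^ D) := by
            rw [show (∫⁻ v : EuclideanSpace ℝ (Fin d),
                  ENNReal.ofReal (Real.exp (-((t + s) * ‖v - w‖ ^ 2))))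
                = ∫⁻ v : EuclideanSpace ℝ (Fin d),
                  ENNReal.ofReal (Real.exp (-((t + s) * ‖v‖ ^ 2))) from
              lintegral_sub_right_eq_self
                (fun v => ENNReal.ofReal (Real.exp (-((t + s) * ‖v‖ ^ 2)))) w,
              lintegral_gauss d hts, hD_def]
        _ = ENNReal.ofReal (t ^ (α - 1) * s ^ (β - 1) * Real.exp (-(t * s / (t + s))) *
              (Real.pi / (t + s)) ^ D) := by
            rw [← ENNReal.ofReal_mul (mul_nonneg (mul_nonneg (Real.rpow_nonneg ht0.le _)
              (Real.rpow_nonneg hs0.le _)) (Real.exp_nonneg _))]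
    -- Step C : substitution s = t σ
    have stepC : ∀ t ∈ Ioi (0:ℝ),
        (∫⁻ s in Ioi (0:ℝ),
            ENNReal.ofReal (t ^ (α - 1) * s ^ (β - 1) * Real.exp (-(t * s / (t + s))) *
              (Real.pi / (t + s)) ^ D))
          = ∫⁻ σ in Ioi (0:ℝ), ENNReal.ofReal (Real.pi ^ D) *
              ENNReal.ofReal (σ ^ (β - 1) * (1 + σ) ^ (-D) *
                (t ^ (γ - 1) * Real.exp (-((σ / (1 + σ)) * t)))) := by
      intro t ht
      have ht0 : (0:ℝ) < t := ht
      rw [lintegral_Ioi_scale ht0 (fun s =>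
        ENNReal.ofReal (t ^ (α - 1) * s ^ (β - 1) * Real.exp (-(t * s / (t + s))) *
          (Real.pi / (t + s)) ^ D))]
      refine setLIntegral_congr_fun_ae measurableSet_Ioi (ae_of_all _ fun σ hσ => ?_)
      have hσ0 : (0:ℝ) < σ := hσ
      have h1σ : (0:ℝ) < 1 + σ := by linarith
      rw [← ENNReal.ofReal_mul ht0.le, ← ENNReal.ofReal_mul (Real.rpow_nonneg hπ.le _)]
      congr 1
      have e1 : (t * σ) ^ (β - 1) = t ^ (β - 1) * σ ^ (β - 1) :=
        Real.mul_rpow ht0.le hσ0.le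
      have e2 : t + t * σ = t * (1 + σ) := by ring
      have e3 : (Real.pi / (t * (1 + σ))) ^ D
          = Real.pi ^ D * (t ^ (-D) * (1 + σ) ^ (-D)) := by
        rw [div_eq_mul_inv, Real.mul_rpow hπ.le (by positivity),
          Real.inv_rpow (by positivity), ← Real.rpow_neg (by positivity : (0:ℝ) ≤ t * (1 + σ)),
          Real.mul_rpow ht0.le h1σ.le]
      have e4 : t * (t * σ) / (t + t * σ) = (σ / (1 + σ)) * t := by
        rw [e2]; field_simp
      have e5 : t * t ^ (α - 1) * t ^ (β - 1) * t ^ (-D) = t ^ (γ - 1) := by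
        calc t * t ^ (α - 1) * t ^ (β - 1) * t ^ (-D)
            = t ^ (α - 1) * t ^ (β - 1) * t ^ (-D) * t := by ring
          _ = t ^ ((α - 1) + (β - 1)) * t ^ (-D) * t := by rw [← Real.rpow_add ht0]
          _ = t ^ ((α - 1) + (β - 1) + (-D)) * t := by rw [← Real.rpow_add ht0]
          _ = t ^ ((α - 1) + (β - 1) + (-D) + 1) := (Real.rpow_add_one ht0.ne' _).symm
          _ = t ^ (γ - 1) := by
              congr 1
              rw [hα_def, hβ_def, hγ_def, hD_def]; ring
      calc t * (t ^ (α - 1) * (t * σ) ^ (β - 1) * Real.exp (-(t * (t * σ) / (t + t * σ))) *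
              (Real.pi / (t + t * σ)) ^ D)
          = t * (t ^ (α - 1) * (t ^ (β - 1) * σ ^ (β - 1)) *
              Real.exp (-((σ / (1 + σ)) * t)) *
              (Real.pi ^ D * (t ^ (-D) * (1 + σ) ^ (-D)))) := by
            rw [e1, e4, e2, e3]
        _ = (t * t ^ (α - 1) * t ^ (β - 1) * t ^ (-D)) *
              (Real.pi ^ D * (σ ^ (β - 1) * (1 + σ) ^ (-D) *
                Real.exp (-((σ / (1 + σ)) * t)))) := by ring
        _ = Real.pi ^ D * (σ ^ (β - 1) * (1 + σ) ^ (-D) *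
              (t ^ (γ - 1) * Real.exp (-((σ / (1 + σ)) * t)))) := by rw [e5]; ring
    -- Step D/E : swap t and σ, integrate out t, then the beta integral
    have stepE : ∀ σ ∈ Ioi (0:ℝ),
        (∫⁻ t in Ioi (0:ℝ),
            ENNReal.ofReal (σ ^ (β - 1) * (1 + σ) ^ (-D) *
              (t ^ (γ - 1) * Real.exp (-((σ / (1 + σ)) * t)))))
          = ENNReal.ofReal (Real.Gamma γ) *
              ENNReal.ofReal (σ ^ (a / 2 - 1) * (1 + σ) ^ (-(a / 2 + b / 2))) := by
      intro σ hσ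
      have hσ0 : (0:ℝ) < σ := hσ
      have h1σ : (0:ℝ) < 1 + σ := by linarith
      have hr : (0:ℝ) < σ / (1 + σ) := by positivity
      have hnn : (0:ℝ) ≤ σ ^ (β - 1) * (1 + σ) ^ (-D) :=
        mul_nonneg (Real.rpow_nonneg hσ0.le _) (Real.rpow_nonneg h1σ.le _)
      rw [show (∫⁻ t in Ioi (0:ℝ),
            ENNReal.ofReal (σ ^ (β - 1) * (1 + σ) ^ (-D) *
              (t ^ (γ - 1) * Real.exp (-((σ / (1 + σ)) * t)))))
          = ENNReal.ofReal (σ ^ (β - 1) * (1 + σ) ^ (-D)) *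
              ∫⁻ t in Ioi (0:ℝ),
                ENNReal.ofReal (t ^ (γ - 1) * Real.exp (-((σ / (1 + σ)) * t))) from by
        rw [← lintegral_const_mul' _ _ ENNReal.ofReal_ne_top]
        exact lintegral_congr fun t => by rw [← ENNReal.ofReal_mul hnn]]
      rw [lintegral_gamma_kernel hγ hr]
      rw [← ENNReal.ofReal_mul hnn, ← ENNReal.ofReal_mul (Real.Gamma_pos_of_pos hγ).le]
      congr 1
      have f1 : (1 / (σ / (1 + σ))) ^ γ = (1 + σ) ^ γ * σ ^ (-γ) := by
        rw [one_div, inv_div, div_eq_mul_inv, Real.mul_rpow h1σ.le (by positivity),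
          Real.inv_rpow hσ0.le, ← Real.rpow_neg hσ0.le]
      have f2 : σ ^ (β - 1) * σ ^ (-γ) = σ ^ (a / 2 - 1) := by
        rw [← Real.rpow_add hσ0]
        congr 1
        rw [hβ_def, hγ_def]; ring
      have f3 : (1 + σ) ^ (-D) * (1 + σ) ^ γ = (1 + σ) ^ (-(a / 2 + b / 2)) := by
        rw [← Real.rpow_add h1σ]
        congr 1
        rw [hγ_def, hD_def]; ring
      calc σ ^ (β - 1) * (1 + σ) ^ (-D) * ((1 / (σ / (1 + σ))) ^ γ * Real.Gamma γ)
          = Real.Gamma γ * ((σ ^ (β - 1) * σ ^ (-γ)) * ((1 + σ) ^ (-D) * (1 + σ) ^ γ)) := by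
            rw [f1]; ring
        _ = Real.Gamma γ * (σ ^ (a / 2 - 1) * (1 + σ) ^ (-(a / 2 + b / 2))) := by
            rw [f2, f3]
    -- assemble
    have hT2 : (∫⁻ t in Ioi (0:ℝ), ∫⁻ s in Ioi (0:ℝ), ∫⁻ v : EuclideanSpace ℝ (Fin d),
            ENNReal.ofReal (t ^ (α - 1) * Real.exp (-(‖u - v‖ ^ 2 * t)) *
              (s ^ (β - 1) * Real.exp (-(‖v‖ ^ 2 * s)))))
        = ENNReal.ofReal (Real.pi ^ D) * (ENNReal.ofReal (Real.Gamma γ) *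
            ENNReal.ofReal (Real.Gamma (a / 2) * Real.Gamma (b / 2) /
              Real.Gamma (a / 2 + b / 2))) := by
      calc (∫⁻ t in Ioi (0:ℝ), ∫⁻ s in Ioi (0:ℝ), ∫⁻ v : EuclideanSpace ℝ (Fin d),
            ENNReal.ofReal (t ^ (α - 1) * Real.exp (-(‖u - v‖ ^ 2 * t)) *
              (s ^ (β - 1) * Real.exp (-(‖v‖ ^ 2 * s)))))
          = ∫⁻ t in Ioi (0:ℝ), ∫⁻ s in Ioi (0:ℝ),
              ENNReal.ofReal (t ^ (α - 1) * s ^ (β - 1) * Real.exp (-(t * s / (t + s))) *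
                (Real.pi / (t + s)) ^ D) := by
            refine setLIntegral_congr_fun_ae measurableSet_Ioi (ae_of_all _ fun t ht => ?_)
            exact setLIntegral_congr_fun_ae measurableSet_Ioi
              (ae_of_all _ fun s hs => stepB t ht s hs)
        _ = ∫⁻ t in Ioi (0:ℝ), ∫⁻ σ in Ioi (0:ℝ), ENNReal.ofReal (Real.pi ^ D) *
              ENNReal.ofReal (σ ^ (β - 1) * (1 + σ) ^ (-D) *
                (t ^ (γ - 1) * Real.exp (-((σ / (1 + σ)) * t)))) :=
            setLIntegral_congr_fun_ae measurableSet_Ioi (ae_of_all _ stepC)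
        _ = ENNReal.ofReal (Real.pi ^ D) * ∫⁻ t in Ioi (0:ℝ), ∫⁻ σ in Ioi (0:ℝ),
              ENNReal.ofReal (σ ^ (β - 1) * (1 + σ) ^ (-D) *
                (t ^ (γ - 1) * Real.exp (-((σ / (1 + σ)) * t)))) := by
            rw [← lintegral_const_mul' _ _ ENNReal.ofReal_ne_top]
            exact lintegral_congr fun t =>
              lintegral_const_mul' _ _ ENNReal.ofReal_ne_top
        _ = ENNReal.ofReal (Real.pi ^ D) * ∫⁻ σ in Ioi (0:ℝ), ∫⁻ t in Ioi (0:ℝ),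
              ENNReal.ofReal (σ ^ (β - 1) * (1 + σ) ^ (-D) *
                (t ^ (γ - 1) * Real.exp (-((σ / (1 + σ)) * t)))) := by
            rw [lintegral_lintegral_swap]
            apply Measurable.aemeasurable
            fun_prop
        _ = ENNReal.ofReal (Real.pi ^ D) * ∫⁻ σ in Ioi (0:ℝ),
              ENNReal.ofReal (Real.Gamma γ) *
                ENNReal.ofReal (σ ^ (a / 2 - 1) * (1 + σ) ^ (-(a / 2 + b / 2))) := by
            rw [setLIntegral_congr_fun_ae measurableSet_Ioi (ae_of_all _ stepE)]
        _ = ENNReal.ofReal (Real.pi ^ D) * (ENNReal.ofReal (Real.Gamma γ) *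
              ENNReal.ofReal (Real.Gamma (a / 2) * Real.Gamma (b / 2) /
                Real.Gamma (a / 2 + b / 2))) := by
            rw [lintegral_const_mul' _ _ ENNReal.ofReal_ne_top,
              lintegral_beta (by linarith : (0:ℝ) < a / 2) (by linarith : (0:ℝ) < b / 2)]
    -- conclude
    have hfinal : ENNReal.ofReal (Real.Gamma α * Real.Gamma β) *
        (∫⁻ v : EuclideanSpace ℝ (Fin d),
          ENNReal.ofReal (‖u - v‖ ^ (a - (d:ℝ)) * ‖v‖ ^ (b - (d:ℝ))))
        = ENNReal.ofReal (Real.pi ^ D * (Real.Gamma γ *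
            (Real.Gamma (a / 2) * Real.Gamma (b / 2) / Real.Gamma (a / 2 + b / 2)))) := by
      rw [← hT1, hswap1, hT2, ← ENNReal.ofReal_mul (Real.Gamma_pos_of_pos hγ).le,
        ← ENNReal.ofReal_mul (Real.rpow_nonneg hπ.le _)]
    have := ofReal_mul_cancel
      (mul_pos (Real.Gamma_pos_of_pos hα) (Real.Gamma_pos_of_pos hβ)) hfinal
    rw [this]
    congr 1
    have g1 : Real.Gamma α ≠ 0 := (Real.Gamma_pos_of_pos hα).ne'
    have g2 : Real.Gamma β ≠ 0 := (Real.Gamma_pos_of_pos hβ).ne'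
    have g3 : Real.Gamma ((a + b) / 2) ≠ 0 := (Real.Gamma_pos_of_pos hab2).ne'
    have g4 : a / 2 + b / 2 = (a + b) / 2 := by ring
    rw [g4]
    field_simp
  have hR_nonneg : 0 ≤ Real.pi ^ ((d : ℝ) / 2) * Real.Gamma (a / 2) * Real.Gamma (b / 2)
            * Real.Gamma γ / (Real.Gamma α * Real.Gamma β * Real.Gamma ((a + b) / 2)) := by
    have := Real.Gamma_pos_of_pos hα
    have := Real.Gamma_pos_of_pos hβ
    have := Real.Gamma_pos_of_pos hγ
    have := Real.Gamma_pos_of_pos (by linarith : (0:ℝ) < a / 2)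
    have := Real.Gamma_pos_of_pos (by linarith : (0:ℝ) < b / 2)
    have := Real.Gamma_pos_of_pos hab2
    positivity
  constructor
  · refine ⟨hF_meas.aestronglyMeasurable, ?_⟩
    rw [hasFiniteIntegral_iff_ofReal (ae_of_all _ hF_nonneg), main]
    exact ENNReal.ofReal_lt_top
  · rw [integral_eq_lintegral_of_nonneg_ae (ae_of_all _ hF_nonneg)
      hF_meas.aestronglyMeasurable, main, ENNReal.toReal_ofReal hR_nonneg]
end
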